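/- Let M be an invertible n×n matrix and F^j, V^{pj}, G^p be n×n matrices. Define the block matrices A^p with blocks [[F^j δ^p_i, M^{-1} δ^p_i],[V^{pj}, G^p]] and 𝔄^p with blocks [[0, δ^p_i],[𝒜^{pj}, ℬ^p]], where 𝒜^{ij} = M^{-1}(V^{ij} − G^i M F^j) and ℬ^i = F^i + M^{-1} G^i M. Then for each p, 𝔄^p = 𝒯^{-1} A^p 𝒯 where 𝒯 is the block matrix [[1, 0],[−M F, M]] (with blocks indexed appropriately), i.e. 𝔄^p and A^p are similar via a fixed invertible matrix independent of p. -/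

import Mathlib

open Matrix

set_option linter.unusedSectionVars false
set_option linter.unusedTactic false

section helpers
variable {n ι : Type*} [Fintype n] [DecidableEq n] [Fintype ι] [DecidableEq ι]

def Rmat (f : ι → Matrix n n ℂ) : Matrix n (ι × n) ℂ :=
  Matrix.of fun a jb => f jb.1 a jb.2

def Cmat (p : ι) (X : Matrix n n ℂ) : Matrix (ι × n) n ℂ :=
  Matrix.of fun ia b => if ia.1 = p then X ia.2 b else 0

def Dmat (p : ι) (f : ι → Matrix n n ℂ) : Matrix (ι × n) (ι × n) ℂ :=
  Matrix.of fun ia jb => if ia.1 = p then f jb.1 ia.2 jb.2 else 0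

lemma R_mul_C (f : ι → Matrix n n ℂ) (p : ι) (X : Matrix n n ℂ) :
    Rmat f * Cmat p X = f p * X := by
  ext a b
  simp [Rmat, Cmat, mul_apply, Fintype.sum_prod_type, mul_ite, mul_zero, Finset.sum_ite_eq]

lemma R_mul_D (f : ι → Matrix n n ℂ) (p : ι) (g : ι → Matrix n n ℂ) :
    Rmat f * Dmat p g = Rmat fun j => f p * g j := by
  ext a jb
  simp [Rmat, Dmat, mul_apply, Fintype.sum_prod_type, mul_ite, mul_zero, Finset.sum_ite_eq]

lemma X_mul_R (X : Matrix n n ℂ) (f : ι → Matrix n n ℂ) :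
    X * Rmat f = Rmat fun j => X * f j := by
  ext a jb
  simp [Rmat, mul_apply]

lemma C_mul_R (p : ι) (X : Matrix n n ℂ) (f : ι → Matrix n n ℂ) :
    Cmat p X * Rmat f = Dmat p fun j => X * f j := by
  ext ia jb
  simp [Rmat, Cmat, Dmat, mul_apply, ite_mul, zero_mul, Finset.sum_ite_eq]

lemma C_mul_X (p : ι) (X Y : Matrix n n ℂ) :
    Cmat p X * Y = Cmat p (X * Y) := by
  ext ia b
  simp [Cmat, mul_apply, ite_mul, zero_mul]

lemma R_add (f g : ι → Matrix n n ℂ) : Rmat f + Rmat g = Rmat fun j => f j + g j := by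
  ext a jb; simp [Rmat]

lemma D_add (p : ι) (f g : ι → Matrix n n ℂ) :
    Dmat p f + Dmat p g = Dmat p fun j => f j + g j := by
  ext ia jb
  simp [Dmat]
  split <;> simp

lemma R_zero : (Rmat (fun _ => 0) : Matrix n (ι × n) ℂ) = 0 := by
  ext a jb; simp [Rmat]

lemma D_zero (p : ι) : (Dmat p (fun _ => 0) : Matrix (ι × n) (ι × n) ℂ) = 0 := by
  ext ia jb; simp [Dmat]

end helpers

/-- The fully second order principal part matrix `𝔄^p` is similar to the
first order in time, second order in space principal part matrix `A^p` via the fixed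
invertible block matrix `𝒯 = [[1,0],[-MF, M]]`, independent of `p`. -/
theorem stmt0 {n ι : Type*} [Fintype n] [DecidableEq n] [Fintype ι] [DecidableEq ι]
    (M : Matrix n n ℂ) (hM : IsUnit M)
    (F G : ι → Matrix n n ℂ) (V : ι → ι → Matrix n n ℂ)
    (𝒜 : ι → ι → Matrix n n ℂ) (ℬ : ι → Matrix n n ℂ)
    (h𝒜 : ∀ i j, 𝒜 i j = M⁻¹ * (V i j - G i * M * F j))
    (hℬ : ∀ i, ℬ i = F i + M⁻¹ * G i * M)
    (A 𝔄 : ι → Matrix ((ι × n) ⊕ n) ((ι × n) ⊕ n) ℂ)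
    (hA : ∀ p, A p = Matrix.of fun r c =>
      match r, c with
      | Sum.inl (i, a), Sum.inl (j, b) => if i = p then F j a b else 0
      | Sum.inl (i, a), Sum.inr b => if i = p then M⁻¹ a b else 0
      | Sum.inr a, Sum.inl (j, b) => V p j a b
      | Sum.inr a, Sum.inr b => G p a b)
    (h𝔄 : ∀ p, 𝔄 p = Matrix.of fun r c =>
      match r, c with
      | Sum.inl _, Sum.inl _ => 0
      | Sum.inl (i, a), Sum.inr b => if i = p then (1 : Matrix n n ℂ) a b else 0
      | Sum.inr a, Sum.inl (j, b) => 𝒜 p j a b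
      | Sum.inr a, Sum.inr b => ℬ p a b)
    (T Tinv : Matrix ((ι × n) ⊕ n) ((ι × n) ⊕ n) ℂ)
    (hT : T = Matrix.of fun r c =>
      match r, c with
      | Sum.inl (i, a), Sum.inl (j, b) => if i = j then (1 : Matrix n n ℂ) a b else 0
      | Sum.inl _, Sum.inr _ => 0
      | Sum.inr a, Sum.inl (j, b) => (-(M * F j)) a b
      | Sum.inr a, Sum.inr b => M a b)
    (hTinv : Tinv = Matrix.of fun r c =>
      match r, c with
      | Sum.inl (i, a), Sum.inl (j, b) => if i = j then (1 : Matrix n n ℂ) a b else 0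
      | Sum.inl _, Sum.inr _ => 0
      | Sum.inr a, Sum.inl (j, b) => F j a b
      | Sum.inr a, Sum.inr b => M⁻¹ a b) :
    Tinv * T = 1 ∧ T * Tinv = 1 ∧ ∀ p, 𝔄 p = Tinv * A p * T := by
  have hMdet : IsUnit M.det := (Matrix.isUnit_iff_isUnit_det M).mp hM
  have h1 : M⁻¹ * M = 1 := Matrix.nonsing_inv_mul M hMdet
  have h2 : M * M⁻¹ = 1 := Matrix.mul_nonsing_inv M hMdet
  have hT' : T = fromBlocks 1 0 (Rmat fun j => -(M * F j)) M := by
    rw [hT]; ext r c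
    rcases r with ⟨i, a⟩ | a <;> rcases c with ⟨j, b⟩ | b <;>
      simp [fromBlocks, Rmat, one_apply, Prod.ext_iff, ite_and]
  have hTinv' : Tinv = fromBlocks 1 0 (Rmat F) M⁻¹ := by
    rw [hTinv]; ext r c
    rcases r with ⟨i, a⟩ | a <;> rcases c with ⟨j, b⟩ | b <;>
      simp [fromBlocks, Rmat, one_apply, Prod.ext_iff, ite_and]
  have hA' : ∀ p, A p = fromBlocks (Dmat p F) (Cmat p M⁻¹) (Rmat (V p)) (G p) := by
    intro p
    rw [hA]; ext r c
    rcases r with ⟨i, a⟩ | a <;> rcases c with ⟨j, b⟩ | b <;>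
      simp [fromBlocks, Rmat, Cmat, Dmat]
  have h𝔄' : ∀ p, 𝔄 p = fromBlocks 0 (Cmat p 1) (Rmat (𝒜 p)) (ℬ p) := by
    intro p
    rw [h𝔄]; ext r c
    rcases r with ⟨i, a⟩ | a <;> rcases c with ⟨j, b⟩ | b <;>
      simp [fromBlocks, Rmat, Cmat, Dmat]
  have hR0 : (Rmat F * (1 : Matrix (ι × n) (ι × n) ℂ) + M⁻¹ * Rmat fun j => -(M * F j)) = (0 : Matrix n (ι × n) ℂ) := by
    rw [Matrix.mul_one, X_mul_R, R_add, ← R_zero]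
    congr 1 <;> funext j
    simp [mul_neg, ← mul_assoc, h1]
  have hR0' : ((Rmat fun j => -(M * F j)) * (1 : Matrix (ι × n) (ι × n) ℂ) + M * Rmat F) = (0 : Matrix n (ι × n) ℂ) := by
    rw [Matrix.mul_one, X_mul_R, R_add, ← R_zero]
    congr 1 <;> funext j
    simp
  have hTiT : Tinv * T = 1 := by
    rw [hTinv', hT', fromBlocks_multiply]
    rw [hR0]
    simp [h1, fromBlocks_one]
  have hTTi : T * Tinv = 1 := by
    rw [hT', hTinv', fromBlocks_multiply]
    rw [hR0']
    simp [h2, fromBlocks_one]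
  refine ⟨hTiT, hTTi, fun p => ?_⟩
  have key : T * 𝔄 p = A p * T := by
    rw [hT', h𝔄' p, hA' p, fromBlocks_multiply, fromBlocks_multiply]
    have eTL : Dmat p F * 1 + Cmat p M⁻¹ * Rmat (fun j => -(M * F j))
        = (0 : Matrix (ι × n) (ι × n) ℂ) := by
      rw [Matrix.mul_one, C_mul_R, D_add, ← D_zero p]
      congr 1
      funext j
      simp [mul_neg, ← mul_assoc, h1]
    have eTR : Dmat p F * (0 : Matrix (ι × n) n ℂ) + Cmat p M⁻¹ * M = Cmat p 1 := by
      rw [Matrix.mul_zero, zero_add, C_mul_X, h1]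
    have eBL : Rmat (V p) * (1 : Matrix (ι × n) (ι × n) ℂ) + G p * Rmat (fun j => -(M * F j))
        = Rmat fun j => M * 𝒜 p j := by
      rw [Matrix.mul_one, X_mul_R, R_add]
      have hfam : (fun j => V p j + G p * -(M * F j)) = fun j => M * 𝒜 p j := by
        funext j
        rw [h𝒜, ← mul_assoc, h2, Matrix.one_mul]
        simp [mul_neg, mul_assoc, sub_eq_add_neg]
      rw [hfam]
    have eBR : Rmat (V p) * (0 : Matrix (ι × n) n ℂ) + G p * M
        = (Rmat fun j => -(M * F j) : Matrix n (ι × n) ℂ) * (Cmat p 1 : Matrix (ι × n) n ℂ) + M * ℬ p := by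
      rw [Matrix.mul_zero, zero_add, R_mul_C, Matrix.mul_one, hℬ]
      simp [mul_add, ← mul_assoc, h2]
    rw [eTL, eTR, eBL, eBR]
    simp [X_mul_R]
  calc 𝔄 p = (Tinv * T) * 𝔄 p := by rw [hTiT, Matrix.one_mul]
    _ = Tinv * (T * 𝔄 p) := by rw [mul_assoc]
    _ = Tinv * (A p * T) := by rw [key]
    _ = Tinv * A p * T := by rw [mul_assoc]
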